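/- The system of functions {(ln x)^n : n ∈ ℕ} is complete in L²(0,1), i.e., the closed linear span of {x ↦ (log x)^n : n ≥ 0} equals L²(0,1). -/

import Mathlib

open MeasureTheory

noncomputable section LogComplete

open Set Complex

local notation "μ01" => (volume.restrict (Set.Ioo (0:ℝ) 1))

namespace LogComplete

lemma vol01 : μ01 Set.univ = 1 := by
  rw [Measure.restrict_apply_univ]
  simp [Real.volume_Ioo]

instance : IsFiniteMeasure μ01 := ⟨by rw [vol01]; exact ENNReal.one_lt_top⟩

/-- Pointwise bound `|log x|^k ≤ k! c^k x^{-1/c}` on `(0,1)`. -/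
lemma log_pow_le {c : ℝ} (hc : 0 < c) (k : ℕ) {x : ℝ} (hx : x ∈ Set.Ioo (0:ℝ) 1) :
    |Real.log x| ^ k ≤ k.factorial * c ^ k * x ^ (-(1/c)) := by
  obtain ⟨hx0, hx1⟩ := hx
  have hlog : Real.log x ≤ 0 := Real.log_nonpos hx0.le hx1.le
  have habs : |Real.log x| = -Real.log x := abs_of_nonpos hlog
  have ht : 0 ≤ -Real.log x / c := div_nonneg (by linarith) hc.le
  have h1 : (-Real.log x / c) ^ k / k.factorial ≤ Real.exp (-Real.log x / c) := by
    calc (-Real.log x / c) ^ k / k.factorial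
        ≤ ∑ i ∈ Finset.range (k+1), (-Real.log x / c) ^ i / i.factorial := by
          refine Finset.single_le_sum (f := fun i => (-Real.log x / c) ^ i / i.factorial)
            (fun i _ => by positivity) (Finset.self_mem_range_succ k)
      _ ≤ Real.exp (-Real.log x / c) := Real.sum_le_exp_of_nonneg ht _
  have hexp : Real.exp (-Real.log x / c) = x ^ (-(1/c)) := by
    rw [Real.rpow_def_of_pos hx0]
    ring_nf
  have h2 : (-Real.log x) ^ k ≤ k.factorial * c ^ k * Real.exp (-Real.log x / c) := by
    have h3 : (-Real.log x / c) ^ k ≤ k.factorial * Real.exp (-Real.log x / c) := by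
      rw [div_le_iff₀ (by positivity : (0:ℝ) < (k.factorial : ℝ))] at h1
      linarith [h1]
    have h4 : (-Real.log x) ^ k = c ^ k * (-Real.log x / c) ^ k := by
      rw [div_pow, mul_div_cancel₀]
      positivity
    rw [h4]
    calc c ^ k * (-Real.log x / c) ^ k
        ≤ c ^ k * (k.factorial * Real.exp (-Real.log x / c)) := by
          exact mul_le_mul_of_nonneg_left h3 (by positivity)
      _ = k.factorial * c ^ k * Real.exp (-Real.log x / c) := by ring
  rw [habs, ← hexp]
  exact h2

/-- `x ↦ x^r` is in `L²(0,1)` for `r > -1/2`. -/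
lemma mem2_rpow {r : ℝ} (hr : -(1/2) < r) : MemLp (fun x : ℝ => x ^ r) 2 μ01 := by
  have hmeas : AEStronglyMeasurable (fun x : ℝ => x ^ r) μ01 :=
    (by measurability : Measurable fun x : ℝ => x ^ r).aestronglyMeasurable
  rw [memLp_two_iff_integrable_sq hmeas]
  have h2r : -1 < 2 * r := by linarith
  have hii : IntegrableOn (fun x : ℝ => x ^ (2 * r)) (Set.Ioc (0:ℝ) 1) volume := by
    have := intervalIntegral.intervalIntegrable_rpow' (a := 0) (b := 1) h2r
    exact (intervalIntegrable_iff_integrableOn_Ioc_of_le (by norm_num)).mp this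
  have hii' : IntegrableOn (fun x : ℝ => x ^ (2 * r)) (Set.Ioo (0:ℝ) 1) volume :=
    hii.mono_set Set.Ioo_subset_Ioc_self
  refine hii'.congr_fun_ae ?_
  filter_upwards [ae_restrict_mem measurableSet_Ioo] with x hx
  rw [← Real.rpow_natCast (x ^ r) 2, ← Real.rpow_mul hx.1.le]
  norm_num [mul_comm]

/-- `x ↦ (log x : ℂ)^n` is in `L²(0,1)`. -/
lemma mem2_logpow (n : ℕ) : MemLp (fun x : ℝ => ((Real.log x : ℂ)) ^ n) 2 μ01 := by
  have hg : MemLp (fun x : ℝ => (n.factorial * 4 ^ n : ℝ) * x ^ (-(1/4) : ℝ)) 2 μ01 :=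
    (mem2_rpow (by norm_num)).const_mul _
  refine MemLp.of_le hg ?_ ?_
  · exact ((Complex.measurable_ofReal.comp Real.measurable_log).pow_const n).aestronglyMeasurable
  · filter_upwards [ae_restrict_mem measurableSet_Ioo] with x hx
    have hb := log_pow_le (by norm_num : (0:ℝ) < 4) n hx
    have hnorm : ‖((Real.log x : ℂ)) ^ n‖ = |Real.log x| ^ n := by
      rw [norm_pow, Complex.norm_real, Real.norm_eq_abs]
    rw [hnorm]
    calc |Real.log x| ^ n ≤ n.factorial * 4 ^ n * x ^ (-(1/4) : ℝ) := hb
      _ ≤ ‖(n.factorial * 4 ^ n : ℝ) * x ^ (-(1/4) : ℝ)‖ := le_abs_self _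

/-- Hölder: product of an `L²` power function with an `L²` element is integrable. -/
lemma integrable_rpow_smul (g : Lp ℂ 2 μ01) {r : ℝ} (hr : -(1/2) < r) :
    Integrable (fun x : ℝ => (x ^ r) • ((g : ℝ → ℂ) x)) μ01 := by
  rw [← memLp_one_iff_integrable]
  have := (Lp.memLp g).smul (r := 1) (mem2_rpow hr)
  exact this


section Analytic

/-- The "Mellin-type" transform of `g`. -/
def F (g : Lp ℂ 2 μ01) (s : ℂ) : ℂ :=
  ∫ x, Complex.exp (s * (Real.log x : ℂ)) * (g : ℝ → ℂ) x ∂μ01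

lemma meas_exp_mul (g : Lp ℂ 2 μ01) (s : ℂ) :
    AEStronglyMeasurable (fun x : ℝ => Complex.exp (s * (Real.log x : ℂ)) * (g : ℝ → ℂ) x) μ01 := by
  have hm : Measurable fun x : ℝ => Complex.exp (s * (Real.log x : ℂ)) :=
    Complex.measurable_exp.comp ((Complex.measurable_ofReal.comp Real.measurable_log).const_mul s)
  exact hm.aestronglyMeasurable.mul (Lp.aestronglyMeasurable g)

lemma norm_exp_mul {s : ℂ} {x : ℝ} (hx : x ∈ Set.Ioo (0:ℝ) 1) :
    ‖Complex.exp (s * (Real.log x : ℂ))‖ = x ^ s.re := by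
  rw [Complex.norm_exp, Real.rpow_def_of_pos hx.1]
  congr 1
  simp [Complex.mul_re, mul_comm]

lemma integrable_exp_mul (g : Lp ℂ 2 μ01) {s : ℂ} (hs : -(1/2) < s.re) :
    Integrable (fun x : ℝ => Complex.exp (s * (Real.log x : ℂ)) * (g : ℝ → ℂ) x) μ01 := by
  refine Integrable.mono' (integrable_rpow_smul g hs).norm (meas_exp_mul g s) ?_
  filter_upwards [ae_restrict_mem measurableSet_Ioo] with x hx
  rw [norm_mul, norm_exp_mul hx, norm_smul, Real.norm_eq_abs,
    _root_.abs_of_nonneg (Real.rpow_nonneg hx.1.le _)]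

lemma hasDerivAt_F (g : Lp ℂ 2 μ01) {s₀ : ℂ} (hs : -(1/8) < s₀.re) :
    HasDerivAt (F g)
      (∫ x, Complex.exp (s₀ * (Real.log x : ℂ)) * (Real.log x : ℂ) * (g : ℝ → ℂ) x ∂μ01) s₀ := by
  set ε : ℝ := (s₀.re + 1/8)/2 with hε_def
  have hε : 0 < ε := by simp only [hε_def]; linarith
  set b : ℝ := s₀.re - ε with hb_def
  have hbgt : -(1/8) < b := by simp only [hb_def, hε_def]; linarith
  have hb2 : -(1/2) < b - 1/4 := by linarith
  have hbound_int : Integrable (fun x : ℝ => 4 * ‖(x ^ (b - 1/4) : ℝ) • (g : ℝ → ℂ) x‖) μ01 :=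
    (integrable_rpow_smul g hb2).norm.const_mul 4
  refine (hasDerivAt_integral_of_dominated_loc_of_deriv_le (Metric.ball_mem_nhds s₀ hε)
    (F := fun s x => Complex.exp (s * (Real.log x : ℂ)) * (g : ℝ → ℂ) x)
    (F' := fun s x => Complex.exp (s * (Real.log x : ℂ)) * (Real.log x : ℂ) * (g : ℝ → ℂ) x)
    (Filter.Eventually.of_forall fun s => meas_exp_mul g s)
    (integrable_exp_mul g (by linarith))
    ?_ ?_ hbound_int ?_).2
  · have hm : Measurable fun x : ℝ =>
        Complex.exp (s₀ * (Real.log x : ℂ)) * (Real.log x : ℂ) :=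
      (Complex.measurable_exp.comp
        ((Complex.measurable_ofReal.comp Real.measurable_log).const_mul s₀)).mul
        (Complex.measurable_ofReal.comp Real.measurable_log)
    exact hm.aestronglyMeasurable.mul (Lp.aestronglyMeasurable g)
  · filter_upwards [ae_restrict_mem measurableSet_Ioo] with x hx
    intro s hsball
    have hx0 := hx.1
    have hx1 := hx.2
    have hre : b ≤ s.re := by
      have h1 : |(s - s₀).re| ≤ ‖s - s₀‖ := Complex.abs_re_le_norm _
      have h2 : ‖s - s₀‖ < ε := by
        rw [← Complex.dist_eq]; exact Metric.mem_ball.mp hsball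
      have := abs_le.mp (le_of_lt (lt_of_le_of_lt h1 h2))
      simp only [Complex.sub_re] at this
      simp only [hb_def]; linarith [this.1]
    have hlog : |Real.log x| ≤ 4 * x ^ (-(1/4) : ℝ) := by
      have := log_pow_le (by norm_num : (0:ℝ) < 4) 1 hx
      simpa using this
    calc ‖Complex.exp (s * (Real.log x : ℂ)) * (Real.log x : ℂ) * (g : ℝ → ℂ) x‖
        = x ^ s.re * |Real.log x| * ‖(g : ℝ → ℂ) x‖ := by
          rw [norm_mul, norm_mul, norm_exp_mul hx, Complex.norm_real, Real.norm_eq_abs]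
      _ ≤ x ^ b * (4 * x ^ (-(1/4) : ℝ)) * ‖(g : ℝ → ℂ) x‖ := by
          refine mul_le_mul_of_nonneg_right (mul_le_mul ?_ hlog (abs_nonneg _)
            (by positivity)) (norm_nonneg _)
          exact Real.rpow_le_rpow_of_exponent_ge hx0 hx1.le hre
      _ = 4 * ‖(x ^ (b - 1/4) : ℝ) • (g : ℝ → ℂ) x‖ := by
          rw [norm_smul, Real.norm_eq_abs, _root_.abs_of_nonneg (Real.rpow_nonneg hx0.le _)]
          rw [show b - 1/4 = b + (-(1/4)) by ring, Real.rpow_add hx0]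
          ring
  · filter_upwards with x
    intro s _
    have h1 : HasDerivAt (fun s : ℂ => s * (Real.log x : ℂ)) (Real.log x : ℂ) s :=
      hasDerivAt_mul_const _
    exact (h1.cexp.mul_const ((g : ℝ → ℂ) x))

lemma F_differentiableOn (g : Lp ℂ 2 μ01) :
    DifferentiableOn ℂ (F g) {s : ℂ | -(1/8) < s.re} := fun s hs =>
  (hasDerivAt_F g hs).differentiableAt.differentiableWithinAt

end Analytic

section Identity

lemma F_zero_small (g : Lp ℂ 2 μ01)
    (hg : ∀ n : ℕ, ∫ x, ((Real.log x : ℂ)) ^ n * (g : ℝ → ℂ) x ∂μ01 = 0)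
    {s : ℂ} (hs : ‖s‖ < 1/8) : F g s = 0 := by
  set f : ℕ → ℝ → ℂ := fun n x => ((s * (Real.log x : ℂ)) ^ n / n.factorial) * (g : ℝ → ℂ) x
    with hf
  have hpt : ∀ x : ℝ, Complex.exp (s * (Real.log x : ℂ)) * (g : ℝ → ℂ) x = ∑' n, f n x := by
    intro x
    rw [hf]
    simp only
    rw [tsum_mul_right]
    congr 1
    rw [Complex.exp_eq_exp_ℂ, NormedSpace.exp_eq_tsum_div]
  have hmeasf : ∀ n, AEStronglyMeasurable (f n) μ01 := by
    intro n
    have hm : Measurable fun x : ℝ => (s * (Real.log x : ℂ)) ^ n / (n.factorial : ℂ) :=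
      (((Complex.measurable_ofReal.comp Real.measurable_log).const_mul s).pow_const n).div_const _
    exact hm.aestronglyMeasurable.mul (Lp.aestronglyMeasurable g)
  have hdom : Integrable (fun x : ℝ => ‖(x ^ (-(1/8) : ℝ) : ℝ) • (g : ℝ → ℂ) x‖) μ01 :=
    (integrable_rpow_smul g (by norm_num)).norm
  set B : ℝ := ∫ x, ‖(x ^ (-(1/8) : ℝ) : ℝ) • (g : ℝ → ℂ) x‖ ∂μ01 with hB
  have hbd : ∀ (n : ℕ), ∀ x ∈ Set.Ioo (0:ℝ) 1,
      ‖f n x‖ ≤ (8 * ‖s‖) ^ n * ‖(x ^ (-(1/8) : ℝ) : ℝ) • (g : ℝ → ℂ) x‖ := by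
    intro n x hx
    have hx0 := hx.1
    have hlp := log_pow_le (by norm_num : (0:ℝ) < 8) n hx
    have h1 : ‖f n x‖ = ‖s‖ ^ n * |Real.log x| ^ n / n.factorial
        * ‖(g : ℝ → ℂ) x‖ := by
      rw [hf]
      simp only
      rw [norm_mul, norm_div, norm_pow, norm_mul]
      simp [Complex.norm_real, mul_pow]
    have key : ‖s‖ ^ n * |Real.log x| ^ n / n.factorial
        ≤ (8 * ‖s‖) ^ n * x ^ (-(1/8) : ℝ) := by
      have hfac : (0:ℝ) < n.factorial := by positivity
      calc ‖s‖ ^ n * |Real.log x| ^ n / n.factorial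
          ≤ ‖s‖ ^ n * (n.factorial * 8 ^ n * x ^ (-(1/8) : ℝ)) / n.factorial := by
            gcongr
        _ = (8 * ‖s‖) ^ n * x ^ (-(1/8) : ℝ) := by
            field_simp
            ring
    rw [h1, norm_smul, Real.norm_eq_abs, _root_.abs_of_nonneg (Real.rpow_nonneg hx0.le _)]
    calc ‖s‖ ^ n * |Real.log x| ^ n / n.factorial * ‖(g : ℝ → ℂ) x‖
        ≤ (8 * ‖s‖) ^ n * x ^ (-(1/8) : ℝ) * ‖(g : ℝ → ℂ) x‖ :=
          mul_le_mul_of_nonneg_right key (norm_nonneg _)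
      _ = (8 * ‖s‖) ^ n * (x ^ (-(1/8) : ℝ) * ‖(g : ℝ → ℂ) x‖) := by ring
  have hsum_int : ∀ n, Integrable (f n) μ01 := by
    intro n
    refine Integrable.mono' (hdom.const_mul ((8 * ‖s‖) ^ n)) (hmeasf n) ?_
    filter_upwards [ae_restrict_mem measurableSet_Ioo] with x hx using hbd n x hx
  have key : ∑' n, ∫⁻ x, ‖f n x‖ₑ ∂μ01 ≠ ⊤ := by
    have hle : ∀ n, ∫⁻ x, ‖f n x‖ₑ ∂μ01 ≤ ENNReal.ofReal ((8 * ‖s‖) ^ n * B) := by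
      intro n
      rw [← ofReal_integral_norm_eq_lintegral_enorm (hsum_int n)]
      apply ENNReal.ofReal_le_ofReal
      calc ∫ x, ‖f n x‖ ∂μ01
          ≤ ∫ x, (8 * ‖s‖) ^ n * ‖(x ^ (-(1/8) : ℝ) : ℝ) • (g : ℝ → ℂ) x‖ ∂μ01 := by
            refine integral_mono_ae (hsum_int n).norm (hdom.const_mul _) ?_
            filter_upwards [ae_restrict_mem measurableSet_Ioo] with x hx using hbd n x hx
        _ = (8 * ‖s‖) ^ n * B := integral_const_mul _ _
    have hr : 8 * ‖s‖ < 1 := by linarith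
    have hsummable : Summable (fun n : ℕ => (8 * ‖s‖) ^ n * B) :=
      (summable_geometric_of_lt_one (by positivity) hr).mul_right B
    refine ne_top_of_le_ne_top ?_ (ENNReal.tsum_le_tsum hle)
    rw [← ENNReal.ofReal_tsum_of_nonneg (fun n => by positivity) hsummable]
    exact ENNReal.ofReal_ne_top
  have hswap := integral_tsum hmeasf key
  have hFs : F g s = ∫ x, ∑' n, f n x ∂μ01 := by
    refine integral_congr_ae (Filter.Eventually.of_forall fun x => ?_)
    exact hpt x
  have hterm : ∀ n, ∫ x, f n x ∂μ01 = 0 := by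
    intro n
    have hptn : ∀ x : ℝ, f n x
        = (s ^ n / n.factorial) * (((Real.log x : ℂ)) ^ n * (g : ℝ → ℂ) x) := by
      intro x
      rw [hf]
      simp only
      rw [mul_pow]
      ring
    calc ∫ x, f n x ∂μ01
        = ∫ x, (s ^ n / n.factorial) * (((Real.log x : ℂ)) ^ n * (g : ℝ → ℂ) x) ∂μ01 :=
          integral_congr_ae (Filter.Eventually.of_forall hptn)
      _ = (s ^ n / n.factorial) * ∫ x, ((Real.log x : ℂ)) ^ n * (g : ℝ → ℂ) x ∂μ01 :=
          integral_const_mul _ _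
      _ = 0 := by rw [hg n]; ring
  rw [hFs, hswap]
  simp [hterm]

lemma F_zero_nat (g : Lp ℂ 2 μ01)
    (hg : ∀ n : ℕ, ∫ x, ((Real.log x : ℂ)) ^ n * (g : ℝ → ℂ) x ∂μ01 = 0) (n : ℕ) :
    F g (n : ℂ) = 0 := by
  have hU_open : IsOpen {s : ℂ | -(1/8) < s.re} := isOpen_lt continuous_const Complex.continuous_re
  have hU_conn : IsPreconnected {s : ℂ | -(1/8) < s.re} :=
    (convex_halfSpace_re_gt _).isPreconnected
  have hana : AnalyticOnNhd ℂ (F g) {s : ℂ | -(1/8) < s.re} :=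
    (F_differentiableOn g).analyticOnNhd hU_open
  have h0 : (0:ℂ) ∈ {s : ℂ | -(1/8) < s.re} := by norm_num
  have hev : F g =ᶠ[nhds 0] 0 := by
    filter_upwards [Metric.ball_mem_nhds (0:ℂ) (by norm_num : (0:ℝ) < 1/8)] with t ht
    exact F_zero_small g hg (by simpa [Complex.dist_eq] using ht)
  have heq := hana.eqOn_zero_of_preconnected_of_eventuallyEq_zero hU_conn h0 hev
  have hn : (n : ℂ) ∈ {s : ℂ | -(1/8) < s.re} := by
    simp only [Set.mem_setOf_eq, Complex.natCast_re]
    exact lt_of_lt_of_le (by norm_num) (Nat.cast_nonneg n)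
  exact heq hn

lemma moments (g : Lp ℂ 2 μ01)
    (hg : ∀ n : ℕ, ∫ x, ((Real.log x : ℂ)) ^ n * (g : ℝ → ℂ) x ∂μ01 = 0) (n : ℕ) :
    ∫ x, ((x : ℂ)) ^ n * (g : ℝ → ℂ) x ∂μ01 = 0 := by
  have h := F_zero_nat g hg n
  rw [F] at h
  rw [← h]
  refine integral_congr_ae ?_
  filter_upwards [ae_restrict_mem measurableSet_Ioo] with x hx
  congr 1
  rw [Complex.exp_nat_mul, ← Complex.ofReal_exp, Real.exp_log hx.1]

end Identity

section Density

lemma memℒp_monomial (n : ℕ) : MemLp (fun x : ℝ => ((x : ℂ)) ^ n) 2 μ01 := by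
  refine MemLp.of_bound ?_ 1 ?_
  · exact (Complex.continuous_ofReal.pow n).aestronglyMeasurable
  · filter_upwards [ae_restrict_mem measurableSet_Ioo] with x hx
    rw [norm_pow, Complex.norm_real, Real.norm_eq_abs, _root_.abs_of_pos hx.1]
    exact pow_le_one₀ hx.1.le hx.2.le

/-- The monomial `x^n` as an element of `L²(0,1)`. -/
def eN (n : ℕ) : Lp ℂ 2 μ01 := (memℒp_monomial n).toLp (fun x : ℝ => ((x : ℂ)) ^ n)

lemma coeFn_sum_eN (c : ℕ → ℂ) (N : ℕ) :
    ((∑ k ∈ Finset.range N, c k • eN k : Lp ℂ 2 μ01) : ℝ → ℂ)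
      =ᵐ[μ01] fun x => ∑ k ∈ Finset.range N, c k * ((x : ℂ)) ^ k := by
  induction N with
  | zero => simpa [Pi.zero_def] using Lp.coeFn_zero ℂ 2 μ01
  | succ N ih =>
    rw [Finset.sum_range_succ]
    filter_upwards [Lp.coeFn_add (∑ k ∈ Finset.range N, c k • eN k) (c N • eN N),
      Lp.coeFn_smul (c N) (eN N), (memℒp_monomial N).coeFn_toLp, ih] with x h1 h2 h3 h4
    rw [h1, Pi.add_apply, h4, h2, Pi.smul_apply, Finset.sum_range_succ]
    congr 1
    rw [show ((eN N : Lp ℂ 2 μ01) : ℝ → ℂ) x = ((x : ℂ)) ^ N from h3]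
    simp [smul_eq_mul]

lemma Mdense : (Submodule.span ℂ (Set.range eN)).topologicalClosure = ⊤ := by
  rw [← Submodule.dense_iff_topologicalClosure_eq_top]
  have hD : Dense (Lp.boundedContinuousFunction ℂ 2 μ01 : Set (Lp ℂ 2 μ01)) :=
    Lp.boundedContinuousFunction_dense ℂ μ01 (by norm_num)
  have hsub : (Lp.boundedContinuousFunction ℂ 2 μ01 : Set (Lp ℂ 2 μ01))
      ⊆ closure ((Submodule.span ℂ (Set.range eN) : Submodule ℂ (Lp ℂ 2 μ01)) : Set _) := by
    intro f hf
    obtain ⟨f₀, hf₀⟩ := Lp.mem_boundedContinuousFunction_iff.mp hf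
    have hfae : ((f : Lp ℂ 2 μ01) : ℝ → ℂ) =ᵐ[μ01] ⇑f₀ := by
      rw [← hf₀]
      exact ContinuousMap.coeFn_toAEEqFun μ01 f₀.toContinuousMap
    rw [Metric.mem_closure_iff]
    intro ε hε
    have hre : ContinuousOn (fun x : ℝ => (f₀ x).re) (Set.Icc (0:ℝ) 1) :=
      (Complex.continuous_re.comp f₀.continuous).continuousOn
    have him : ContinuousOn (fun x : ℝ => (f₀ x).im) (Set.Icc (0:ℝ) 1) :=
      (Complex.continuous_im.comp f₀.continuous).continuousOn
    obtain ⟨p, hp⟩ := exists_polynomial_near_of_continuousOn 0 1 _ hre (ε/4) (by linarith)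
    obtain ⟨q, hq⟩ := exists_polynomial_near_of_continuousOn 0 1 _ him (ε/4) (by linarith)
    set N : ℕ := max p.natDegree q.natDegree + 1 with hN
    set c : ℕ → ℂ := fun k => (p.coeff k : ℂ) + (q.coeff k : ℂ) * Complex.I with hc
    set P : Lp ℂ 2 μ01 := ∑ k ∈ Finset.range N, c k • eN k with hP
    have hPmem : P ∈ Submodule.span ℂ (Set.range eN) :=
      Submodule.sum_mem _ fun k _ =>
        Submodule.smul_mem _ _ (Submodule.subset_span ⟨k, rfl⟩)
    refine ⟨P, hPmem, ?_⟩
    have hpoly : ∀ x : ℝ, ∑ k ∈ Finset.range N, c k * ((x : ℂ)) ^ k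
        = ((p.eval x : ℝ) : ℂ) + ((q.eval x : ℝ) : ℂ) * Complex.I := by
      intro x
      have hpN : p.natDegree < N := by omega
      have hqN : q.natDegree < N := by omega
      rw [Polynomial.eval_eq_sum_range' hpN, Polynomial.eval_eq_sum_range' hqN]
      push_cast
      rw [Finset.sum_mul]
      rw [← Finset.sum_add_distrib]
      refine Finset.sum_congr rfl fun k _ => ?_
      simp only [hc]
      ring
    have hdist : dist f P ≤ ε / 2 := by
      rw [dist_eq_norm]
      have hbound : ∀ᵐ x ∂μ01, ‖((f - P : Lp ℂ 2 μ01) : ℝ → ℂ) x‖ ≤ ε / 2 := by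
        filter_upwards [Lp.coeFn_sub f P, hfae, coeFn_sum_eN c N,
          ae_restrict_mem measurableSet_Ioo] with x h1 h2 h3 h4
        have hxmem : x ∈ Set.Icc (0:ℝ) 1 := Set.Ioo_subset_Icc_self h4
        rw [h1, Pi.sub_apply, h2, hP, h3, hpoly x]
        have hz : (f₀ x - (((p.eval x : ℝ) : ℂ) + ((q.eval x : ℝ) : ℂ) * Complex.I)).re
            = (f₀ x).re - p.eval x := by simp
        have hz' : (f₀ x - (((p.eval x : ℝ) : ℂ) + ((q.eval x : ℝ) : ℂ) * Complex.I)).im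
            = (f₀ x).im - q.eval x := by simp
        calc ‖f₀ x - (((p.eval x : ℝ) : ℂ) + ((q.eval x : ℝ) : ℂ) * Complex.I)‖
            ≤ |(f₀ x - (((p.eval x : ℝ) : ℂ) + ((q.eval x : ℝ) : ℂ) * Complex.I)).re|
              + |(f₀ x - (((p.eval x : ℝ) : ℂ) + ((q.eval x : ℝ) : ℂ) * Complex.I)).im| :=
              Complex.norm_le_abs_re_add_abs_im _
          _ ≤ ε / 2 := by
              rw [hz, hz']
              have h5 := hp x hxmem
              have h6 := hq x hxmem
              rw [abs_sub_comm ((f₀ x).re) _, abs_sub_comm ((f₀ x).im) _] at *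
              linarith [abs_sub_comm (p.eval x) ((f₀ x).re), abs_sub_comm (q.eval x) ((f₀ x).im)]
      have := Lp.norm_le_of_ae_bound (f := f - P) (by linarith : (0:ℝ) ≤ ε / 2) hbound
      calc ‖f - P‖ ≤ (measureUnivNNReal μ01 : ℝ) ^ (2:ENNReal).toReal⁻¹ * (ε / 2) := this
        _ = ε / 2 := by
            rw [show measureUnivNNReal μ01 = 1 from ?_]
            · norm_num
            · simp [measureUnivNNReal, vol01]
    linarith [hdist]
  exact (dense_closure.mp (hD.mono hsub))

end Density

end LogComplete

/-- The system `{(ln x)^n : n ∈ ℕ}` is complete in `L²(0,1)`. -/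
theorem stmt_0 :
    (Submodule.span ℂ {f : Lp ℂ 2 (volume.restrict (Set.Ioo (0:ℝ) 1)) |
        ∃ n : ℕ, ∀ᵐ x ∂(volume.restrict (Set.Ioo (0:ℝ) 1)),
          f x = (Real.log x : ℂ) ^ n}).topologicalClosure = ⊤ := by
  rw [Submodule.topologicalClosure_eq_top_iff, Submodule.eq_bot_iff]
  intro g hgmem
  -- Step 1: orthogonality to all powers of the logarithm, as integrals.
  have hg : ∀ n : ℕ, ∫ x, ((Real.log x : ℂ)) ^ n * (g : ℝ → ℂ) x
      ∂(volume.restrict (Set.Ioo (0:ℝ) 1)) = 0 := by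
    intro n
    have hfnS : (LogComplete.mem2_logpow n).toLp (fun x : ℝ => ((Real.log x : ℂ)) ^ n)
        ∈ {f : Lp ℂ 2 (volume.restrict (Set.Ioo (0:ℝ) 1)) |
        ∃ n : ℕ, ∀ᵐ x ∂(volume.restrict (Set.Ioo (0:ℝ) 1)),
          f x = (Real.log x : ℂ) ^ n} :=
      ⟨n, (LogComplete.mem2_logpow n).coeFn_toLp⟩
    have hinner := (Submodule.mem_orthogonal _ g).mp hgmem _ (Submodule.subset_span hfnS)
    rw [L2.inner_def] at hinner
    rw [← hinner]
    refine integral_congr_ae ?_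
    filter_upwards [(LogComplete.mem2_logpow n).coeFn_toLp] with x hx
    rw [RCLike.inner_apply', hx]
    congr 1
    rw [map_pow, Complex.conj_ofReal]
  -- Step 2: orthogonality to all monomials, via analytic continuation.
  have hmom : ∀ n : ℕ, (inner ℂ (LogComplete.eN n) g : ℂ) = 0 := by
    intro n
    rw [L2.inner_def, ← LogComplete.moments g hg n]
    refine integral_congr_ae ?_
    filter_upwards [(LogComplete.memℒp_monomial n).coeFn_toLp] with x hx
    rw [RCLike.inner_apply']
    rw [show ((LogComplete.eN n : Lp ℂ 2 (volume.restrict (Set.Ioo (0:ℝ) 1))) : ℝ → ℂ) x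
        = ((x : ℂ)) ^ n from hx]
    congr 1
    rw [map_pow, Complex.conj_ofReal]
  -- Step 3: monomials span a dense subspace, hence `g = 0`.
  have hgM : g ∈ (Submodule.span ℂ (Set.range LogComplete.eN))ᗮ := by
    rw [Submodule.mem_orthogonal]
    intro u hu
    induction hu using Submodule.span_induction with
    | mem u hu => obtain ⟨n, rfl⟩ := hu; exact hmom n
    | zero => exact inner_zero_left g
    | add u v _ _ h1 h2 => rw [inner_add_left, h1, h2]; ring
    | smul a u _ h => rw [inner_smul_left, h]; ring
  have hbot : (Submodule.span ℂ (Set.range LogComplete.eN))ᗮ = ⊥ :=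
    Submodule.topologicalClosure_eq_top_iff.mp LogComplete.Mdense
  rw [hbot] at hgM
  exact hgM

end LogComplete
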